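/- Let (a_n), (b_n), (c_n) be sequences in a field with b_0 = 1 and a_n ≠ 0, c_n ≠ 0 for all n, and let A be the lower triangular matrix with A(n,k) = a_k·b_{n-k}·c_n for n ≥ k ≥ 0. Then the matrix inverse of A (as a lower triangular matrix) has entries (A^{-1})(n,k) = a_n^{-1}·B_{n-k}·c_k^{-1}, where B_0 = 1 and B_n = Σ_{j=1}^{n} (-1)^j Σ_{i_1+⋯+i_j = n, each i_t ≥ 1} b_{i_1}·b_{i_2}·⋯·b_{i_j} for n ≥ 1. -/

import Mathlib

open Finset

private def S {F : Type*} [Field F] (b : ℕ → F) (j n : ℕ) : F :=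
  ∑ f ∈ (Finset.Nat.antidiagonalTuple j n).filter (fun f => ∀ t, 0 < f t), ∏ t, b (f t)

private lemma S_vanish {F : Type*} [Field F] (b : ℕ → F) {j n : ℕ} (h : n < j) :
    S b j n = 0 := by
  unfold S
  apply Finset.sum_eq_zero
  intro f hf
  exfalso
  simp only [Finset.mem_filter, Finset.Nat.mem_antidiagonalTuple] at hf
  have : (j : ℕ) ≤ n := by
    calc (j : ℕ) = ∑ _t : Fin j, 1 := by simp
    _ ≤ ∑ t, f t := Finset.sum_le_sum (fun t _ => hf.2 t)
    _ = n := hf.1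
  omega

private lemma S_zero {F : Type*} [Field F] (b : ℕ → F) (m : ℕ) :
    S b 0 m = if m = 0 then 1 else 0 := by
  unfold S
  rcases m with _ | m
  · rw [Finset.Nat.antidiagonalTuple_zero_zero]
    simp
  · rw [Finset.Nat.antidiagonalTuple_zero_succ]
    simp

private lemma S_split {F : Type*} [Field F] (b : ℕ → F) (j n : ℕ) (hn : 1 ≤ n) :
    S b (j+1) n = ∑ m ∈ Finset.range n, b (n - m) * S b j m := by
  unfold S
  simp_rw [Finset.mul_sum]
  rw [Finset.sum_sigma']
  refine Finset.sum_nbij' (fun f => ⟨n - f (Fin.last j), Fin.init f⟩)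
    (fun p => Fin.snoc p.2 (n - p.1)) ?_ ?_ ?_ ?_ ?_
  · intro f hf
    simp only [Finset.mem_filter, Finset.Nat.mem_antidiagonalTuple] at hf
    obtain ⟨hsum, hpos⟩ := hf
    have hle : f (Fin.last j) ≤ n := by
      rw [← hsum]; exact Finset.single_le_sum (fun t _ => Nat.zero_le _) (mem_univ _)
    simp only [Finset.mem_sigma, Finset.mem_range, Finset.mem_filter,
      Finset.Nat.mem_antidiagonalTuple]
    refine ⟨?_, ?_, ?_⟩
    · have := hpos (Fin.last j); omega
    · have : ∑ t : Fin j, Fin.init f t + f (Fin.last j) = n := by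
        rw [← hsum, Fin.sum_univ_castSucc]; rfl
      omega
    · intro t; exact hpos _
  · rintro ⟨m, g⟩ hp
    simp only [Finset.mem_sigma, Finset.mem_range, Finset.mem_filter,
      Finset.Nat.mem_antidiagonalTuple] at hp
    obtain ⟨hm, hgsum, hgpos⟩ := hp
    simp only [Finset.mem_filter, Finset.Nat.mem_antidiagonalTuple]
    constructor
    · rw [Fin.sum_univ_castSucc]
      simp only [Fin.snoc_castSucc, Fin.snoc_last, hgsum]
      omega
    · intro t
      refine Fin.lastCases ?_ ?_ t
      · simp only [Fin.snoc_last]; omega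
      · intro i; simp only [Fin.snoc_castSucc]; exact hgpos i
  · intro f hf
    simp only [Finset.mem_filter, Finset.Nat.mem_antidiagonalTuple] at hf
    have hle : f (Fin.last j) ≤ n := by
      rw [← hf.1]; exact Finset.single_le_sum (fun t _ => Nat.zero_le _) (mem_univ _)
    have : n - (n - f (Fin.last j)) = f (Fin.last j) := by omega
    simp only [this, Fin.snoc_init_self]
  · rintro ⟨m, g⟩ hp
    simp only [Finset.mem_sigma, Finset.mem_range] at hp
    have : n - (n - m) = m := by omega
    simp only [Fin.snoc_last, this, Fin.init_snoc]
  · intro f hf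
    simp only [Finset.mem_filter, Finset.Nat.mem_antidiagonalTuple] at hf
    have hle : f (Fin.last j) ≤ n := by
      rw [← hf.1]; exact Finset.single_le_sum (fun t _ => Nat.zero_le _) (mem_univ _)
    have h1 : n - (n - f (Fin.last j)) = f (Fin.last j) := by omega
    rw [Fin.prod_univ_castSucc, h1, mul_comm]
    rfl

private lemma S_one {F : Type*} [Field F] (b : ℕ → F) (n : ℕ) (hn : 1 ≤ n) :
    S b 1 n = b n := by
  rw [S_split b 0 n hn]
  rw [Finset.sum_eq_single 0]
  · rw [S_zero]; simp
  · intro m hm hm0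
    rw [S_zero, if_neg hm0, mul_zero]
  · intro h; simp at h; omega

private lemma key_sum {F : Type*} [Field F] (b B : ℕ → F) (hb0 : b 0 = 1) (hB0 : B 0 = 1)
    (hB : ∀ n, 1 ≤ n → B n = ∑ j ∈ Finset.Icc 1 n, (-1:F)^j * S b j n)
    (N : ℕ) (hN : 1 ≤ N) :
    ∑ m ∈ Finset.range (N+1), b (N - m) * B m = 0 := by
  rw [Finset.sum_range_succ, Nat.sub_self, hb0, one_mul]
  rw [Finset.range_eq_Ico, Finset.sum_eq_sum_Ico_succ_bot hN]
  rw [Nat.sub_zero, hB0, mul_one]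
  have hmid : ∑ m ∈ Finset.Ico 1 N, b (N - m) * B m
      = ∑ j ∈ Finset.Icc 1 N, (-1:F)^j * S b (j+1) N := by
    have step1 : ∀ m ∈ Finset.Ico 1 N, b (N - m) * B m
        = ∑ j ∈ Finset.Icc 1 N, (-1:F)^j * (b (N - m) * S b j m) := by
      intro m hm
      simp only [Finset.mem_Ico] at hm
      rw [hB m hm.1, Finset.mul_sum]
      rw [Finset.sum_subset (Finset.Icc_subset_Icc_right (le_of_lt hm.2))]
      · apply Finset.sum_congr rfl; intro j _; ring
      · intro j hj hj'
        simp only [Finset.mem_Icc] at hj hj'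
        rw [S_vanish b (by omega), mul_zero, mul_zero]
    rw [Finset.sum_congr rfl step1, Finset.sum_comm]
    apply Finset.sum_congr rfl
    intro j hj
    simp only [Finset.mem_Icc] at hj
    rw [S_split b j N hN, Finset.mul_sum, Finset.range_eq_Ico,
      Finset.sum_eq_sum_Ico_succ_bot hN]
    rw [S_vanish b (by omega : (0:ℕ) < j), mul_zero, mul_zero, zero_add]
  rw [hmid]
  have hre : ∑ j ∈ Finset.Icc 1 N, (-1:F)^j * S b (j+1) N
      = -∑ j ∈ Finset.Icc 2 (N+1), (-1:F)^j * S b j N := by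
    rw [← Finset.map_add_right_Icc 1 N 1, Finset.sum_map]
    rw [← Finset.sum_neg_distrib]
    apply Finset.sum_congr rfl
    intro j _
    simp only [addRightEmbedding_apply]
    rw [pow_succ]
    ring
  rw [hre]
  have htop : ∑ j ∈ Finset.Icc 2 (N+1), (-1:F)^j * S b j N
      = ∑ j ∈ Finset.Icc 2 N, (-1:F)^j * S b j N := by
    rw [Finset.sum_Icc_succ_top (by omega : 2 ≤ N+1)]
    rw [S_vanish b (by omega), mul_zero, add_zero]
  rw [htop]
  have hBN : B N = -S b 1 N + ∑ j ∈ Finset.Icc 2 N, (-1:F)^j * S b j N := by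
    rw [hB N hN, ← Finset.Ico_add_one_right_eq_Icc, Finset.sum_eq_sum_Ico_succ_bot (by omega : 1 < N+1)]
    rw [Finset.Ico_add_one_right_eq_Icc]
    simp only [pow_one, neg_one_mul]
  rw [S_one b N hN] at hBN
  have : ∑ j ∈ Finset.Icc 2 N, (-1:F)^j * S b j N = B N + b N := by
    rw [hBN]; ring
  rw [this]
  ring

theorem inverse_of_three_factor_matrix {F : Type*} [Field F]
    (a b c B : ℕ → F) (hb0 : b 0 = 1)
    (ha : ∀ n, a n ≠ 0) (hc : ∀ n, c n ≠ 0)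
    (hB0 : B 0 = 1)
    (hB : ∀ n, 1 ≤ n → B n =
      ∑ j ∈ Finset.Icc 1 n, (-1 : F)^j *
        ∑ f ∈ (Finset.Nat.antidiagonalTuple j n).filter (fun f => ∀ t, 0 < f t),
          ∏ t, b (f t))
    (A M : ℕ → ℕ → F)
    (hA : ∀ n k, A n k = if k ≤ n then a k * b (n-k) * c n else 0)
    (hM : ∀ n k, M n k = if k ≤ n then (a n)⁻¹ * B (n-k) * (c k)⁻¹ else 0) :
    ∀ n k, k ≤ n → ∑ j ∈ Finset.Icc k n, A n j * M j k =
      if n = k then 1 else 0 := by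
  intro n k hkn
  have hterm : ∀ j ∈ Finset.Icc k n, A n j * M j k
      = c n * (c k)⁻¹ * (b (n - j) * B (j - k)) := by
    intro j hj
    simp only [Finset.mem_Icc] at hj
    rw [hA, hM, if_pos hj.2, if_pos hj.1]
    have h1 : a j * b (n-j) * c n * ((a j)⁻¹ * B (j-k) * (c k)⁻¹)
        = (a j * (a j)⁻¹) * (c n * (c k)⁻¹ * (b (n-j) * B (j-k))) := by ring
    rw [h1, mul_inv_cancel₀ (ha j), one_mul]
  rw [Finset.sum_congr rfl hterm, ← Finset.mul_sum]
  rcases eq_or_lt_of_le hkn with heq | hlt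
  · subst heq
    rw [if_pos rfl, Finset.Icc_self, Finset.sum_singleton, Nat.sub_self, hb0, hB0]
    have h2 : c k * (c k)⁻¹ * (1 * 1) = c k * (c k)⁻¹ := by ring
    rw [h2, mul_inv_cancel₀ (hc k)]
  · rw [if_neg (by omega)]
    have hre : ∑ j ∈ Finset.Icc k n, b (n - j) * B (j - k)
        = ∑ m ∈ Finset.range (n - k + 1), b (n - k - m) * B m := by
      have h1 : Finset.Icc k n = (Finset.Icc 0 (n-k)).map (addLeftEmbedding k) := by
        rw [Finset.map_add_left_Icc]
        congr 1 <;> omega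
      rw [h1, Finset.sum_map, ← Finset.Ico_add_one_right_eq_Icc, Finset.range_eq_Ico]
      apply Finset.sum_congr rfl
      intro m hm
      simp only [Finset.mem_Ico] at hm
      simp only [addLeftEmbedding_apply]
      congr 2 <;> omega
    rw [hre, key_sum b B hb0 hB0 (fun n hn => hB n hn) (n - k) (by omega), mul_zero]
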